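/- (Splitting Lemma, compact version) Let R be the random graph, K ⊆ Aut(R) a compact set (in the pointwise convergence topology), M ⊆ V a finite set of vertices, τ : M → {0,1} a function, and n ∈ ℕ. Then, for any fixed enumeration V = {v₀, v₁, …}, there exists a vertex v ∉ {v_i : i ≤ n} which realizes τ (i.e., for every w ∈ M, w is adjacent to v iff τ(w) = 1) and which is a splitting point for M and K, meaning: for all h, h' ∈ K with h|_M ≠ h'|_M we have h(v) ≠ h'(v) and h⁻¹(v) ≠ h'⁻¹(v). -/

import Mathlib

/-- The defining extension property of the random (Rado) graph. -/
def ExtensionProperty {V : Type*} (G : SimpleGraph V) : Prop :=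
  ∀ A B : Finset V, Disjoint A B →
    ∃ v : V, (∀ a ∈ A, G.Adj a v) ∧ (∀ b ∈ B, ¬ G.Adj b v)

/-- The pointwise convergence topology on the automorphism group of a graph on a
(discrete) vertex set: induced from `V^V × V^V` via `f ↦ (f, f⁻¹)`. -/
def autTopology {V : Type*} (G : SimpleGraph V) : TopologicalSpace (G ≃g G) :=
  letI : TopologicalSpace V := ⊥
  TopologicalSpace.induced (fun f => ((f : V → V), (f.symm : V → V))) inferInstance

/-- `v` realizes `τ` over `M`: for every `w ∈ M`, `w` is adjacent to `v` iff `τ w = true`. -/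
def Realizes {V : Type*} (G : SimpleGraph V) (M : Finset V) (τ : V → Bool) (v : V) : Prop :=
  ∀ w ∈ M, (G.Adj w v ↔ τ w = true)

/-- From the extension property: a vertex realizing a pattern `π` on a finite set `S`,
avoiding a finite set `F`. -/
lemma exists_realizes_avoiding {V : Type*} (G : SimpleGraph V)
    (hG : ExtensionProperty G) (S F : Finset V) (π : V → Bool) :
    ∃ v : V, v ∉ F ∧ ∀ w ∈ S, (G.Adj w v ↔ π w = true) := by
  classical
  obtain ⟨y, hy, -⟩ := hG (S ∪ F) ∅ (Finset.disjoint_empty_right _)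
  have hyS : y ∉ S ∪ F := fun hmem => G.loopless.irrefl y (hy y hmem)
  set A : Finset V := S.filter (fun w => π w = true) with hA
  set B : Finset V := ((S ∪ F) ∪ {y}) \ A with hB
  obtain ⟨v, hvA, hvB⟩ := hG A B Finset.disjoint_sdiff
  refine ⟨v, ?_, ?_⟩
  · intro hvF
    have hyB : y ∈ B := by
      have hyA : y ∉ A := fun h => hyS (Finset.mem_union_left _ (Finset.mem_filter.mp h).1)
      exact Finset.mem_sdiff.mpr
        ⟨Finset.mem_union_right _ (Finset.mem_singleton_self y), hyA⟩
    exact hvB y hyB ((hy v (Finset.mem_union_right _ hvF)).symm)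
  · intro w hw
    by_cases hπ : π w = true
    · have hwA : w ∈ A := Finset.mem_filter.mpr ⟨hw, hπ⟩
      simp [hvA w hwA, hπ]
    · have hwB : w ∈ B := Finset.mem_sdiff.mpr
        ⟨Finset.mem_union_left _ (Finset.mem_union_left _ hw),
         fun h => hπ (Finset.mem_filter.mp h).2⟩
      simp [hvB w hwB, hπ]

/-- Compactness in the pointwise topology gives finite orbits of any point. -/
lemma compact_image_finite {V : Type*} (G : SimpleGraph V)
    (K : Set (G ≃g G)) (hK : @IsCompact _ (autTopology G) K) (x : V) :
    ((fun h : G ≃g G => (h x : V)) '' K).Finite ∧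
      ((fun h : G ≃g G => (h.symm x : V)) '' K).Finite := by
  letI : TopologicalSpace V := ⊥
  haveI : DiscreteTopology V := ⟨rfl⟩
  letI : TopologicalSpace (G ≃g G) := autTopology G
  have hcont : Continuous (fun f : G ≃g G => ((f : V → V), (f.symm : V → V))) :=
    continuous_induced_dom
  have h1 : Continuous (fun h : G ≃g G => (h x : V)) :=
    (continuous_apply x).comp (continuous_fst.comp hcont)
  have h2 : Continuous (fun h : G ≃g G => (h.symm x : V)) :=
    (continuous_apply x).comp (continuous_snd.comp hcont)
  exact ⟨(hK.image h1).finite_of_discrete, (hK.image h2).finite_of_discrete⟩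

/-- Splitting Lemma, compact version: for compact `K ⊆ Aut(R)`, finite `M`, `τ : M → 2` and
`n ∈ ℕ`, there is a vertex `v ∉ {v₀, …, vₙ}` realizing `τ` which is a splitting point for
`M` and `K`. -/
theorem splitting_lemma {V : Type*} [Countable V] [Infinite V]
    (G : SimpleGraph V) (hG : ExtensionProperty G) (e : ℕ ≃ V)
    (K : Set (G ≃g G)) (hK : @IsCompact _ (autTopology G) K)
    (M : Finset V) (τ : V → Bool) (n : ℕ) :
    ∃ v : V, (∀ i ≤ n, v ≠ e i) ∧ Realizes G M τ v ∧
      ∀ h ∈ K, ∀ h' ∈ K, (∃ w ∈ M, h w ≠ h' w) →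
        h v ≠ h' v ∧ h.symm v ≠ h'.symm v := by
  classical
  haveI : Nonempty V := inferInstance
  haveI : Nonempty (G ≃g G) := ⟨RelIso.refl _⟩
  set Kpm : Set (G ≃g G) := K ∪ (fun h : G ≃g G => h.symm) '' K with hKpm_def
  have hKmem : ∀ h ∈ K, h ∈ Kpm := fun h hh => Set.mem_union_left _ hh
  have hKpm_symm : ∀ g : G ≃g G, g ∈ Kpm → g.symm ∈ Kpm := by
    rintro g (hg | ⟨h, hh, rfl⟩)
    · exact Set.mem_union_right _ ⟨g, hg, rfl⟩
    · exact Set.mem_union_left _ hh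
  -- orbits are finite
  let orbit : V → Set V := fun y => {v : V | ∃ g ∈ Kpm, (g y : V) = v}
  have horb : ∀ y : V, (orbit y).Finite := by
    intro y
    obtain ⟨h1, h2⟩ := compact_image_finite G K hK y
    refine (h1.union h2).subset ?_
    rintro v ⟨g, hg, rfl⟩
    rcases hg with hg | ⟨h, hh, rfl⟩
    · exact Set.mem_union_left _ ⟨g, hg, rfl⟩
    · exact Set.mem_union_right _ ⟨h, hh, rfl⟩
  let img : Set V → Set V := fun s => ⋃ y ∈ s, orbit y
  have himg_fin : ∀ s : Set V, s.Finite → (img s).Finite :=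
    fun s hs => hs.biUnion fun y _ => horb y
  have mem_img : ∀ {s : Set V} {y : V}, y ∈ s → ∀ g ∈ Kpm, (g y : V) ∈ img s :=
    fun {s y} hy g hg => Set.mem_biUnion hy ⟨g, hg, rfl⟩
  let N1 : Set V := ↑M ∪ img ↑M
  let N2 : Set V := N1 ∪ img N1
  let S0 : Set V := N2 ∪ img N2
  have hN1fin : N1.Finite := M.finite_toSet.union (himg_fin _ M.finite_toSet)
  have hN2fin : N2.Finite := hN1fin.union (himg_fin _ hN1fin)
  have hS0fin : S0.Finite := hN2fin.union (himg_fin _ hN2fin)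
  have hMN1 : (↑M : Set V) ⊆ N1 := Set.subset_union_left
  have hN1S0 : N1 ⊆ S0 := Set.Subset.trans Set.subset_union_left Set.subset_union_left
  have hMS0 : (↑M : Set V) ⊆ S0 := hMN1.trans hN1S0
  have himgN1 : ∀ g ∈ Kpm, ∀ w ∈ N1, (g w : V) ∈ S0 := by
    intro g hg w hw
    exact Set.subset_union_left (Set.subset_union_right (mem_img hw g hg))
  -- finitely many restriction behaviours: representatives
  obtain ⟨T, hTsub, hTfin, hrep⟩ : ∃ T : Set (G ≃g G), T ⊆ Kpm ∧ T.Finite ∧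
      ∀ g : G ≃g G, g ∈ Kpm → ∃ a : G ≃g G, a ∈ T ∧
        ∀ y ∈ S0, (a y : V) = g y ∧ (a.symm y : V) = g.symm y := by
    set S0f : Finset V := hS0fin.toFinset with hS0f_def
    let r : (G ≃g G) → (S0f → V × V) := fun g i => ((g i.1 : V), (g.symm i.1 : V))
    have him : (r '' Kpm).Finite := by
      have hpi : (Set.pi Set.univ fun i : S0f => orbit i.1 ×ˢ orbit i.1).Finite :=
        Set.Finite.pi fun i => (horb i.1).prod (horb i.1)
      refine hpi.subset ?_
      rintro f ⟨g, hg, rfl⟩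
      rw [Set.mem_univ_pi]
      intro i
      exact ⟨⟨g, hg, rfl⟩, ⟨g.symm, hKpm_symm g hg, rfl⟩⟩
    refine ⟨Function.invFunOn r Kpm '' (r '' Kpm), ?_, him.image _, ?_⟩
    · rintro a ⟨b, hb, rfl⟩
      obtain ⟨g, hg, rfl⟩ := hb
      exact Function.invFunOn_mem ⟨g, hg, rfl⟩
    · intro g hg
      refine ⟨Function.invFunOn r Kpm (r g), ⟨⟨r g, ⟨g, hg, rfl⟩, rfl⟩, ?_⟩⟩
      have heq : r (Function.invFunOn r Kpm (r g)) = r g := Function.invFunOn_eq ⟨g, hg, rfl⟩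
      intro y hy
      have hy' : y ∈ S0f := hS0fin.mem_toFinset.mpr hy
      have hcf := congrFun heq ⟨y, hy'⟩
      exact ⟨congrArg Prod.fst hcf, congrArg Prod.snd hcf⟩
  -- active pairs of representatives, witness points, and counter-points
  let Act : Set ((G ≃g G) × (G ≃g G)) :=
    {p | p.1 ∈ T ∧ p.2 ∈ T ∧ ∃ w ∈ N1, (p.1 w : V) ≠ p.2 w}
  have hActfin : Act.Finite := (hTfin.prod hTfin).subset fun p hp => ⟨hp.1, hp.2.1⟩
  let wit : (G ≃g G) × (G ≃g G) → V := fun p =>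
    if h : ∃ w ∈ N1, (p.1 w : V) ≠ p.2 w then h.choose else Classical.arbitrary V
  have hwit : ∀ p ∈ Act, wit p ∈ N1 ∧ (p.1 (wit p) : V) ≠ p.2 (wit p) := by
    intro p hp
    have h := hp.2.2
    simp only [wit, dif_pos h]
    exact h.choose_spec
  let zee : (G ≃g G) × (G ≃g G) → V := fun p => p.2.symm (p.1 (wit p))
  have hwz : ∀ p ∈ Act, wit p ≠ zee p := by
    intro p hp heq
    have h2 := (hwit p hp).2
    have hz : (p.2 (zee p) : V) = p.1 (wit p) := RelIso.apply_symm_apply p.2 _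
    rw [← heq] at hz
    exact h2 hz.symm
  -- marker points
  have hmarkers : ∀ Q : Set ((G ≃g G) × (G ≃g G)), Q.Finite → Q ⊆ Act →
      ∃ x : (G ≃g G) × (G ≃g G) → V,
        (∀ p ∈ Q, G.Adj (wit p) (x p) ∧ ¬ G.Adj (zee p) (x p)) ∧
        (∀ p ∈ Q, ∀ g ∈ Kpm, (g (x p) : V) ∉ S0) ∧
        (∀ p ∈ Q, ∀ q ∈ Q, p ≠ q → ∀ g ∈ Kpm, ∀ g' ∈ Kpm, (g (x p) : V) ≠ g' (x q)) := by
    intro Q hQ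
    refine Set.Finite.induction_on (motive := fun Q _ => Q ⊆ Act →
      ∃ x : (G ≃g G) × (G ≃g G) → V,
        (∀ p ∈ Q, G.Adj (wit p) (x p) ∧ ¬ G.Adj (zee p) (x p)) ∧
        (∀ p ∈ Q, ∀ g ∈ Kpm, (g (x p) : V) ∉ S0) ∧
        (∀ p ∈ Q, ∀ q ∈ Q, p ≠ q → ∀ g ∈ Kpm, ∀ g' ∈ Kpm, (g (x p) : V) ≠ g' (x q)))
      Q hQ ?_ ?_
    · intro _
      exact ⟨fun _ => Classical.arbitrary V, by simp, by simp, by simp⟩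
    · intro p₀ Q' hp₀Q' hQ'fin IH hsub
      obtain ⟨x, hx1, hx2, hx3⟩ := IH (fun q hq => hsub (Set.mem_insert_of_mem _ hq))
      have hp₀ : p₀ ∈ Act := hsub (Set.mem_insert _ _)
      set OQ : Set V := ⋃ q ∈ Q', orbit (x q) with hOQ
      have hOQfin : OQ.Finite := hQ'fin.biUnion fun q _ => horb (x q)
      have hFbadfin : (img (S0 ∪ OQ)).Finite := himg_fin _ (hS0fin.union hOQfin)
      obtain ⟨x₀, hx₀F, hx₀real⟩ := exists_realizes_avoiding G hG {wit p₀, zee p₀}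
        hFbadfin.toFinset (fun u => decide (u = wit p₀))
      have hx₀orb : ∀ g ∈ Kpm, (g x₀ : V) ∉ S0 ∪ OQ := by
        intro g hg hmem
        apply hx₀F
        rw [Set.Finite.mem_toFinset]
        have hx0 : x₀ = g.symm (g x₀) := (RelIso.symm_apply_apply g x₀).symm
        rw [hx0]
        exact mem_img hmem g.symm (hKpm_symm g hg)
      have hadj1 : G.Adj (wit p₀) x₀ :=
        (hx₀real (wit p₀) (Finset.mem_insert_self _ _)).mpr (by simp)
      have hadj2 : ¬ G.Adj (zee p₀) x₀ := by
        intro h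
        have hz := (hx₀real (zee p₀) (by simp)).mp h
        rw [decide_eq_true_iff] at hz
        exact hwz p₀ hp₀ hz.symm
      refine ⟨Function.update x p₀ x₀, ?_, ?_, ?_⟩
      · intro p hp
        rcases Set.mem_insert_iff.mp hp with rfl | hpQ
        · rw [Function.update_self]
          exact ⟨hadj1, hadj2⟩
        · rw [Function.update_of_ne (show p ≠ p₀ from fun hpp => hp₀Q' (by rw [hpp] at hpQ; exact hpQ)) _ _]
          exact hx1 p hpQ
      · intro p hp g hg
        rcases Set.mem_insert_iff.mp hp with rfl | hpQ
        · rw [Function.update_self]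
          exact fun h => hx₀orb g hg (Set.mem_union_left _ h)
        · rw [Function.update_of_ne (show p ≠ p₀ from fun hpp => hp₀Q' (by rw [hpp] at hpQ; exact hpQ)) _ _]
          exact hx2 p hpQ g hg
      · intro p hp q hq hne g hg g' hg'
        rcases Set.mem_insert_iff.mp hp with rfl | hpQ
        · rcases Set.mem_insert_iff.mp hq with rfl | hqQ
          · exact absurd rfl hne
          · rw [Function.update_self, Function.update_of_ne (show q ≠ p from fun hqq => hp₀Q' (by rw [hqq] at hqQ; exact hqQ)) _ _]
            intro hcon
            apply hx₀orb g hg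
            rw [hcon]
            exact Set.mem_union_right _ (Set.mem_biUnion hqQ ⟨g', hg', rfl⟩)
        · rcases Set.mem_insert_iff.mp hq with rfl | hqQ
          · rw [Function.update_self, Function.update_of_ne (show p ≠ q from fun hpp => hp₀Q' (by rw [hpp] at hpQ; exact hpQ)) _ _]
            intro hcon
            apply hx₀orb g' hg'
            rw [← hcon]
            exact Set.mem_union_right _ (Set.mem_biUnion hpQ ⟨g, hg, rfl⟩)
          · rw [Function.update_of_ne (show p ≠ p₀ from fun hpp => hp₀Q' (by rw [hpp] at hpQ; exact hpQ)) _ _,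
              Function.update_of_ne (show q ≠ p₀ from fun hqq => hp₀Q' (by rw [hqq] at hqQ; exact hqQ)) _ _]
            exact hx3 p hpQ q hqQ hne g hg g' hg'
  obtain ⟨x, hx1, hx2, hx3⟩ := hmarkers Act hActfin (le_refl _)
  -- the coloring
  let Big : Set V := ⋃ p ∈ Act, orbit (x p)
  have hBigfin : Big.Finite := hActfin.biUnion fun p _ => horb (x p)
  let Pos : Set V := {u : V | ∃ p ∈ Act, ∃ g ∈ Kpm,
    (∀ y ∈ S0, (g y : V) = p.1 y ∧ (g.symm y : V) = p.1.symm y) ∧ (g (x p) : V) = u}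
  have hPosBig : Pos ⊆ Big := by
    rintro u ⟨p, hp, g, hg, -, rfl⟩
    exact Set.mem_biUnion hp ⟨g, hg, rfl⟩
  have hBigS0 : ∀ u ∈ Big, u ∉ S0 := by
    intro u hu
    simp only [Big, Set.mem_iUnion] at hu
    obtain ⟨p, hp, g, hg, rfl⟩ := hu
    exact hx2 p hp g hg
  let π : V → Bool := fun u => if u ∈ Pos then true else if u ∈ Big then false else τ u
  have hπPos : ∀ u ∈ Pos, π u = true := fun u hu => if_pos hu
  have hπBig : ∀ u, u ∉ Pos → u ∈ Big → π u = false :=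
    fun u h1 h2 => (if_neg h1).trans (if_pos h2)
  have hπτ : ∀ u, u ∉ Pos → u ∉ Big → π u = τ u :=
    fun u h1 h2 => (if_neg h1).trans (if_neg h2)
  have hSfin : (S0 ∪ Big).Finite := hS0fin.union hBigfin
  obtain ⟨v, hvF, hvreal⟩ := exists_realizes_avoiding G hG hSfin.toFinset
    ((Finset.range (n + 1)).image e) π
  -- the core splitting property
  have core : ∀ g : G ≃g G, g ∈ Kpm → ∀ g' : G ≃g G, g' ∈ Kpm →
      (∃ w ∈ N1, (g w : V) ≠ g' w) → (g.symm v : V) ≠ g'.symm v := by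
    rintro g hg g' hg' ⟨w₀, hw₀, hne⟩
    obtain ⟨a, haT, ha⟩ := hrep g hg
    obtain ⟨b, hbT, hb⟩ := hrep g' hg'
    clear hrep
    have hpAct : ((a, b) : (G ≃g G) × (G ≃g G)) ∈ Act := by
      refine ⟨haT, hbT, w₀, hw₀, ?_⟩
      show (a w₀ : V) ≠ b w₀
      rw [(ha w₀ (hN1S0 hw₀)).1, (hb w₀ (hN1S0 hw₀)).1]
      exact hne
    set p : (G ≃g G) × (G ≃g G) := (a, b) with hp_def
    have hp1 : p.1 = a := rfl
    have hp2 : p.2 = b := rfl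
    have hw' := hwit p hpAct
    have hw'S0 : wit p ∈ S0 := hN1S0 hw'.1
    have haw'S0 : (a (wit p) : V) ∈ S0 := himgN1 a (hTsub haT) (wit p) hw'.1
    have hgxBig : (g (x p) : V) ∈ Big := Set.mem_biUnion hpAct ⟨g, hg, rfl⟩
    have hg'xBig : (g' (x p) : V) ∈ Big := Set.mem_biUnion hpAct ⟨g', hg', rfl⟩
    have hgxPos : (g (x p) : V) ∈ Pos :=
      ⟨p, hpAct, g, hg, fun y hy => ⟨(ha y hy).1.symm, (ha y hy).2.symm⟩, rfl⟩
    have hg'xPos : (g' (x p) : V) ∉ Pos := by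
      rintro ⟨q, hq, g₁, hg₁, hmatch, heq⟩
      by_cases hqp : q = p
      · subst hqp
        have hAdjw : G.Adj (g₁ (wit p)) (g₁ (x p)) := g₁.map_rel_iff.mpr (hx1 p hq).1
        rw [(hmatch (wit p) hw'S0).1, hp1, heq] at hAdjw
        have hAdjw2 : G.Adj (g' (g'.symm (a (wit p)))) (g' (x p)) := by
          rwa [RelIso.apply_symm_apply]
        have hAdj2 : G.Adj (g'.symm (a (wit p))) (x p) := g'.map_rel_iff.mp hAdjw2
        rw [← (hb (a (wit p)) haw'S0).2] at hAdj2
        exact (hx1 p hq).2 hAdj2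
      · exact hx3 q hq p hpAct hqp g₁ hg₁ g' hg' heq
    have hgxS : (g (x p) : V) ∈ hSfin.toFinset := by
      rw [Set.Finite.mem_toFinset]; exact Set.mem_union_right _ hgxBig
    have hg'xS : (g' (x p) : V) ∈ hSfin.toFinset := by
      rw [Set.Finite.mem_toFinset]; exact Set.mem_union_right _ hg'xBig
    have hAdjgx : G.Adj (g (x p)) v := (hvreal _ hgxS).mpr (hπPos _ hgxPos)
    have hAdjg'x : ¬ G.Adj (g' (x p)) v := by
      intro h
      have hb' := (hvreal _ hg'xS).mp h
      rw [hπBig _ hg'xPos hg'xBig] at hb'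
      exact Bool.false_ne_true hb'
    intro hqeq
    have e1 : G.Adj (x p) (g.symm v) := by
      have h1 : G.Adj (g (x p)) (g (g.symm v)) := by rwa [RelIso.apply_symm_apply]
      exact g.map_rel_iff.mp h1
    have e2 : ¬ G.Adj (x p) (g'.symm v) := by
      intro h
      apply hAdjg'x
      have h2 := g'.map_rel_iff.mpr h
      rwa [RelIso.apply_symm_apply] at h2
    rw [hqeq] at e1
    exact e2 e1
  -- assemble
  refine ⟨v, ?_, ?_, ?_⟩
  · intro i hi hvi
    exact hvF (Finset.mem_image.mpr ⟨i, Finset.mem_range.mpr (Nat.lt_succ_of_le hi), hvi.symm⟩)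
  · intro w hw
    have hwS : w ∈ hSfin.toFinset := by
      rw [Set.Finite.mem_toFinset]
      exact Set.mem_union_left _ (hMS0 (Finset.mem_coe.mpr hw))
    rw [hvreal w hwS]
    have h1 : w ∉ Big := fun h => hBigS0 w h (hMS0 (Finset.mem_coe.mpr hw))
    have h2 : w ∉ Pos := fun h => h1 (hPosBig h)
    rw [hπτ w h2 h1]
  · rintro h hh h' hh' ⟨w, hwM, hne⟩
    have hhK : h ∈ Kpm := hKmem h hh
    have hh'K : h' ∈ Kpm := hKmem h' hh'
    have hwN1 : w ∈ N1 := hMN1 (Finset.mem_coe.mpr hwM)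
    constructor
    · have hsym : (h.symm : G ≃g G) ∈ Kpm := hKpm_symm h hhK
      have hsym' : (h'.symm : G ≃g G) ∈ Kpm := hKpm_symm h' hh'K
      have hdiff : ∃ w₀ ∈ N1, (h.symm w₀ : V) ≠ h'.symm w₀ := by
        refine ⟨h w, Set.mem_union_right _ (mem_img (Finset.mem_coe.mpr hwM) h hhK), ?_⟩
        intro hcon
        apply hne
        have hc : (h' (h.symm (h w)) : V) = h w := by
          rw [hcon]; exact RelIso.apply_symm_apply h' (h w)
        rw [RelIso.symm_apply_apply] at hc
        exact hc.symm
      have hcore := core h.symm hsym h'.symm hsym' hdiff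
      simpa using hcore
    · exact core h hhK h' hh'K ⟨w, hwN1, hne⟩
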